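/- For the cycle graph C_n with n ≥ 3 vertices, the connected vertex covers (i.e., the nuclei) of C_n are exactly: the paths with n − 2 edges, the paths with n − 1 edges, and C_n itself. -/

import Mathlib

open SimpleGraph

/-- `Shade_v(F)`: edges of `G` with an endpoint connected to `v` by an `F`-path. -/
def Shade {V : Type*} (G : SimpleGraph V) (v : V) (F : Set (Sym2 V)) : Set (Sym2 V) :=
  {e ∈ G.edgeSet | ∃ u ∈ e, (SimpleGraph.fromEdgeSet F).Reachable u v}

/-- The simplicial complex `A_v`. -/
def Avert {V : Type*} (G : SimpleGraph V) (v : V) : Set (Set (Sym2 V)) :=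
  {F | F ⊆ G.edgeSet ∧ Shade G v F ⊂ G.edgeSet}

/-- Vertex set of the edge-induced subgraph `G_σ`. -/
def edgeVerts {V : Type*} (σ : Set (Sym2 V)) : Set V :=
  {u | ∃ e ∈ σ, u ∈ e}

/-- Connectedness of the edge-induced subgraph `G_σ`. -/
def edgeConnected {V : Type*} (σ : Set (Sym2 V)) : Prop :=
  σ.Nonempty ∧ ∀ u ∈ edgeVerts σ, ∀ w ∈ edgeVerts σ,
    (SimpleGraph.fromEdgeSet σ).Reachable u w

/-- `X` is a vertex cover of `G`. -/
def IsVertexCover {V : Type*} (G : SimpleGraph V) (X : Set V) : Prop :=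
  ∀ e ∈ G.edgeSet, ∃ u ∈ e, u ∈ X

/-- A nucleus of `G`: a connected subgraph whose vertex set is a vertex cover. -/
def IsNucleus {V : Type*} (G : SimpleGraph V) (N : G.Subgraph) : Prop :=
  N.Connected ∧ _root_.IsVertexCover G N.verts

/-- The `U`-nucleus complex `Δ^G_U`. -/
def nucleusComplex {V : Type*} (G : SimpleGraph V) (U : Set V) : Set (Set (Sym2 V)) :=
  {S | ∃ N : G.Subgraph, IsNucleus G N ∧ U ⊆ N.verts ∧ S = G.edgeSet \ N.edgeSet}

section Aux

variable {m : ℕ}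

/-- The `i`-th edge of the cycle. -/
private def phi (m : ℕ) (i : Fin (m + 3)) : Sym2 (Fin (m + 3)) := s(i, i + 1)

private lemma mem_cyc_edge {e : Sym2 (Fin (m + 3))} :
    e ∈ (cycleGraph (m + 3)).edgeSet ↔ ∃ i, e = phi m i := by
  induction e using Sym2.ind with
  | _ u v =>
    rw [SimpleGraph.mem_edgeSet]
    show (cycleGraph (m + 1 + 2)).Adj u v ↔ _
    rw [cycleGraph_adj]
    constructor
    · rintro (h | h)
      · refine ⟨v, ?_⟩
        have hu : u = v + 1 := sub_eq_iff_eq_add'.mp h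
        rw [phi, hu]; exact Sym2.eq_swap
      · refine ⟨u, ?_⟩
        have hv : v = u + 1 := sub_eq_iff_eq_add'.mp h
        rw [phi, hv]
    · rintro ⟨i, hi⟩
      rw [phi, Sym2.eq_iff] at hi
      rcases hi with ⟨rfl, rfl⟩ | ⟨rfl, rfl⟩
      · right; exact add_sub_cancel_left u 1
      · left; exact add_sub_cancel_left v 1

private lemma finTwoNeZero : (1 + 1 : Fin (m + 3)) ≠ 0 := by
  intro h
  have h2 : ((1 + 1 : Fin (m + 3)) : ℕ) = 2 := by
    rw [Fin.val_add, Fin.val_one]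
    exact Nat.mod_eq_of_lt (by omega)
  rw [h] at h2
  simp at h2

private lemma finOneNeZero : (1 : Fin (m + 3)) ≠ 0 := by
  intro h
  have h2 : ((1 : Fin (m + 3)) : ℕ) = 1 := Fin.val_one _
  rw [h] at h2
  simp at h2

private lemma phi_inj : Function.Injective (phi m) := by
  intro i j h
  rw [phi, phi, Sym2.eq_iff] at h
  rcases h with ⟨h, -⟩ | ⟨h1, h2⟩
  · exact h
  · exfalso
    have h3 : j + (1 + 1) = j := by rw [← add_assoc, ← h1]; exact h2
    exact finTwoNeZero (m := m) (left_eq_add.mp h3.symm)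

private def gfun (a b c : ℕ) (x : Fin (m + 3)) : ℕ :=
  if x.val ≤ a then 2 else if x.val ≤ b then 0 else if x.val ≤ c then 1 else 2

private lemma val_add_one' (i : Fin (m + 3)) :
    ((i + 1 : Fin (m + 3)) : ℕ) = if i.val = m + 2 then 0 else i.val + 1 := by
  rw [Fin.val_add, Fin.val_one]
  split_ifs with h
  · rw [h]; simp
  · exact Nat.mod_eq_of_lt (by have := i.isLt; omega)

private lemma gfun_step {a b c : ℕ} (hab : a < b) (hbc : b < c) (hc : c < m + 3)
    {i : Fin (m + 3)} (ha : i.val ≠ a) (hb : i.val ≠ b) (hcc : i.val ≠ c) :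
    gfun a b c i = gfun a b c (i + 1) := by
  have hv := val_add_one' i
  have hlt := i.isLt
  unfold gfun
  rw [hv]
  split_ifs <;> omega

private lemma adj_const {V : Type*} {G : SimpleGraph V} (N : G.Subgraph) (hc : N.Connected)
    (f : V → ℕ) (hf : ∀ a b, N.Adj a b → f a = f b) :
    ∀ u ∈ N.verts, ∀ w ∈ N.verts, f u = f w := by
  intro u hu w hw
  obtain ⟨p⟩ := hc ⟨u, hu⟩ ⟨w, hw⟩
  have key : ∀ {x y : N.verts} (_ : N.coe.Walk x y), f x = f y := by
    intro x y q
    induction q with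
    | nil => rfl
    | cons h q ih => exact (hf _ _ h).trans ih
  exact key p

private lemma exists_edge_of_mem {V : Type*} {G : SimpleGraph V} (N : G.Subgraph)
    (hc : N.Connected) {w₀ x₀ : V} (hadj : N.Adj w₀ x₀) :
    ∀ v ∈ N.verts, ∃ e ∈ N.edgeSet, v ∈ e := by
  intro v hv
  by_cases hvw : v = w₀
  · subst hvw
    exact ⟨s(v, x₀), hadj, Sym2.mem_mk_left _ _⟩
  · obtain ⟨p⟩ := hc ⟨v, hv⟩ ⟨w₀, hadj.fst_mem⟩
    have hnn : ¬ p.Nil := SimpleGraph.Walk.not_nil_of_ne (by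
      intro h; exact hvw (congrArg Subtype.val h))
    rw [SimpleGraph.Walk.not_nil_iff] at hnn
    obtain ⟨u, h, q, -⟩ := hnn
    exact ⟨s(v, (u : V)), h, Sym2.mem_mk_left _ _⟩

/-- Key impossibility: a connected vertex-cover subgraph cannot miss three edges. -/
private lemma no_three_missing (N : (cycleGraph (m + 3)).Subgraph)
    (hconn : N.Connected) (hcover : _root_.IsVertexCover (cycleGraph (m + 3)) N.verts)
    {a b c : ℕ} (hab : a < b) (hbc : b < c) (hc : c < m + 3)
    (hA : phi m ⟨a, by omega⟩ ∉ N.edgeSet)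
    (hB : phi m ⟨b, by omega⟩ ∉ N.edgeSet)
    (hC : phi m ⟨c, hc⟩ ∉ N.edgeSet) : False := by
  set f : Fin (m + 3) → ℕ := gfun a b c with hf
  have hadj : ∀ x y, N.Adj x y → f x = f y := by
    intro x y hxy
    have he : s(x, y) ∈ N.edgeSet := SimpleGraph.Subgraph.mem_edgeSet.mp hxy
    obtain ⟨i, hi⟩ := mem_cyc_edge.mp (N.edgeSet_subset he)
    have hia : i.val ≠ a := by
      rintro h
      exact hA (by rwa [show (⟨a, by omega⟩ : Fin (m+3)) = i from (Fin.ext h.symm), ← hi])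
    have hib : i.val ≠ b := by
      rintro h
      exact hB (by rwa [show (⟨b, by omega⟩ : Fin (m+3)) = i from (Fin.ext h.symm), ← hi])
    have hic : i.val ≠ c := by
      rintro h
      exact hC (by rwa [show (⟨c, hc⟩ : Fin (m+3)) = i from (Fin.ext h.symm), ← hi])
    have hstep := gfun_step hab hbc hc hia hib hic
    rw [phi, Sym2.eq_iff] at hi
    rcases hi with ⟨rfl, rfl⟩ | ⟨rfl, rfl⟩
    · exact hstep
    · exact hstep.symm
  have hconst := adj_const N hconn f hadj
  obtain ⟨v₀, hv₀⟩ := hconn.nonempty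
  -- values of f at the endpoints of the three missing edges
  have hva : f ⟨a, by omega⟩ = 2 := by simp only [hf, gfun]; split_ifs <;> omega
  have hva1 : f (⟨a, by omega⟩ + 1) = 0 := by
    simp only [hf, gfun, val_add_one']
    split_ifs <;> omega
  have hvb : f ⟨b, by omega⟩ = 0 := by simp only [hf, gfun]; split_ifs <;> omega
  have hvb1 : f (⟨b, by omega⟩ + 1) = 1 := by
    simp only [hf, gfun, val_add_one']
    split_ifs <;> omega
  have hvc : f ⟨c, hc⟩ = 1 := by simp only [hf, gfun]; split_ifs <;> omega
  have hvc1 : f (⟨c, hc⟩ + 1) = 2 := by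
    simp only [hf, gfun, val_add_one']
    split_ifs <;> omega
  -- cover applied to the three missing edges
  have hmem : ∀ x : Fin (m + 3), phi m x ∈ (cycleGraph (m + 3)).edgeSet :=
    fun x => mem_cyc_edge.mpr ⟨x, rfl⟩
  obtain ⟨ua, hua, huaV⟩ := hcover _ (hmem ⟨a, by omega⟩)
  obtain ⟨ub, hub, hubV⟩ := hcover _ (hmem ⟨b, by omega⟩)
  obtain ⟨uc, huc, hucV⟩ := hcover _ (hmem ⟨c, hc⟩)
  rw [phi, Sym2.mem_iff] at hua hub huc
  have ea : f ua = 2 ∨ f ua = 0 := by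
    rcases hua with rfl | rfl
    · exact Or.inl hva
    · exact Or.inr hva1
  have eb : f ub = 0 ∨ f ub = 1 := by
    rcases hub with rfl | rfl
    · exact Or.inl hvb
    · exact Or.inr hvb1
  have ec : f uc = 1 ∨ f uc = 2 := by
    rcases huc with rfl | rfl
    · exact Or.inl hvc
    · exact Or.inr hvc1
  have h1 : f ua = f v₀ := hconst _ huaV _ hv₀
  have h2 : f ub = f v₀ := hconst _ hubV _ hv₀
  have h3 : f uc = f v₀ := hconst _ hucV _ hv₀
  omega

end Aux

theorem stmt_10 (n : ℕ) (hn : 3 ≤ n) (N : (SimpleGraph.cycleGraph n).Subgraph) :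
    IsNucleus (SimpleGraph.cycleGraph n) N ↔
      (N = ⊤ ∨
        (N.Connected ∧ (∀ v ∈ N.verts, ∃ e ∈ N.edgeSet, v ∈ e) ∧
          (N.edgeSet.ncard = n - 2 ∨ N.edgeSet.ncard = n - 1))) := by
  classical
  obtain ⟨m, rfl⟩ : ∃ m, n = m + 3 := ⟨n - 3, by omega⟩
  constructor
  · rintro ⟨hconn, hcover⟩
    -- the set of edge-indices present in N
    set P : Finset (Fin (m + 3)) :=
      Finset.univ.filter (fun i => phi m i ∈ N.edgeSet) with hP
    have hedge_eq : N.edgeSet = ↑(P.image (phi m)) := by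
      ext e
      constructor
      · intro he
        obtain ⟨i, rfl⟩ := mem_cyc_edge.mp (N.edgeSet_subset he)
        exact Finset.mem_coe.mpr (Finset.mem_image.mpr
          ⟨i, Finset.mem_filter.mpr ⟨Finset.mem_univ _, he⟩, rfl⟩)
      · intro he
        obtain ⟨i, hi, rfl⟩ := Finset.mem_image.mp (Finset.mem_coe.mp he)
        exact (Finset.mem_filter.mp hi).2
    have hncard : N.edgeSet.ncard = P.card := by
      rw [hedge_eq, Set.ncard_coe_finset, Finset.card_image_of_injective _ phi_inj]
    have hPcompl : Pᶜ.card ≤ 2 := by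
      by_contra hgt
      push_neg at hgt
      obtain ⟨x, y, z, hx, hy, hz, hxy, hxz, hyz⟩ := Finset.two_lt_card_iff.mp hgt
      simp only [Finset.mem_compl, hP, Finset.mem_filter, Finset.mem_univ, true_and] at hx hy hz
      -- sort the three values
      have hxyv : x.val ≠ y.val := fun h => hxy (Fin.ext h)
      have hxzv : x.val ≠ z.val := fun h => hxz (Fin.ext h)
      have hyzv : y.val ≠ z.val := fun h => hyz (Fin.ext h)
      have hmx := x.isLt; have hmy := y.isLt; have hmz := z.isLt
      have key : ∀ (a b c : ℕ) (hab : a < b) (hbc : b < c) (hc : c < m + 3),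
          phi m ⟨a, by omega⟩ ∉ N.edgeSet → phi m ⟨b, by omega⟩ ∉ N.edgeSet →
          phi m ⟨c, hc⟩ ∉ N.edgeSet → False := by
        intro a b c hab hbc hc h1 h2 h3
        exact no_three_missing N hconn hcover hab hbc hc h1 h2 h3
      have hx' : phi m ⟨x.val, x.isLt⟩ ∉ N.edgeSet := by simpa using hx
      have hy' : phi m ⟨y.val, y.isLt⟩ ∉ N.edgeSet := by simpa using hy
      have hz' : phi m ⟨z.val, z.isLt⟩ ∉ N.edgeSet := by simpa using hz
      rcases lt_trichotomy x.val y.val with h1 | h1 | h1 <;>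
        rcases lt_trichotomy y.val z.val with h2 | h2 | h2 <;>
          rcases lt_trichotomy x.val z.val with h3 | h3 | h3 <;>
            first
              | exact key _ _ _ h1 h2 (by omega) hx' hy' hz'
              | exact key _ _ _ h3 (by omega) (by omega) hx' hz' hy'
              | exact key _ _ _ h2 (by omega) (by omega) hy' hz' hx'
              | exact key _ _ _ (by omega) (by omega) (by omega) hy' hx' hz'
              | exact key _ _ _ (by omega) (by omega) (by omega) hz' hx' hy'
              | exact key _ _ _ (by omega) (by omega) (by omega) hz' hy' hx'
              | omega
    have hPcard : P.card + Pᶜ.card = m + 3 := by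
      rw [Finset.card_compl]
      have : P.card ≤ m + 3 := by
        have := Finset.card_le_card (Finset.subset_univ P)
        simpa using this
      simp [Fintype.card_fin]
      omega
    rcases Nat.lt_or_ge Pᶜ.card 1 with h0 | h1
    · -- no missing edges : N = ⊤
      left
      have hall : ∀ i : Fin (m + 3), phi m i ∈ N.edgeSet := by
        intro i
        by_contra hi
        have : i ∈ Pᶜ := by
          simp only [Finset.mem_compl, hP, Finset.mem_filter, Finset.mem_univ, true_and]
          exact hi
        have := Finset.card_pos.mpr ⟨i, this⟩
        omega
      have hverts : N.verts = Set.univ := by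
        apply Set.eq_univ_of_forall
        intro v
        exact N.mem_verts_of_mem_edge (hall v) (Sym2.mem_mk_left _ _)
      apply SimpleGraph.Subgraph.ext
      · rw [hverts, SimpleGraph.Subgraph.verts_top]
      · ext u v
        rw [SimpleGraph.Subgraph.top_adj]
        constructor
        · exact fun h => N.adj_sub h
        · intro h
          obtain ⟨i, hi⟩ := mem_cyc_edge.mp ((SimpleGraph.mem_edgeSet _).mpr h)
          exact SimpleGraph.Subgraph.mem_edgeSet.mp (by rw [hi]; exact hall i)
    · -- one or two missing edges
      right
      have hEcard : N.edgeSet.ncard = m + 3 - Pᶜ.card := by omega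
      have hpos : N.edgeSet.ncard ≠ 0 := by omega
      have hEne : N.edgeSet.Nonempty := by
        rcases Set.eq_empty_or_nonempty N.edgeSet with h | h
        · exact absurd (by simp [h]) hpos
        · exact h
      obtain ⟨e, he⟩ := hEne
      have hadj : ∃ w₀ x₀, N.Adj w₀ x₀ := by
        induction e using Sym2.ind with
        | _ w₀ x₀ => exact ⟨w₀, x₀, SimpleGraph.Subgraph.mem_edgeSet.mpr he⟩
      obtain ⟨w₀, x₀, hadj⟩ := hadj
      refine ⟨hconn, exists_edge_of_mem N hconn hadj, ?_⟩
      interval_cases h : Pᶜ.card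
      · right; omega
      · left; omega
  · rintro (rfl | ⟨hconn, -, hcount⟩)
    · constructor
      · rw [SimpleGraph.Subgraph.connected_iff_forall_exists_walk_subgraph]
        refine ⟨⟨0, by simp⟩, ?_⟩
        intro u v _ _
        obtain ⟨p⟩ := (cycleGraph_connected (n := m + 2)) u v
        exact ⟨p, le_top⟩
      · intro e he
        obtain ⟨i, rfl⟩ := mem_cyc_edge.mp he
        exact ⟨i, Sym2.mem_mk_left _ _, by simp⟩
    · refine ⟨hconn, ?_⟩
      intro e he
      by_contra hcov
      push_neg at hcov
      obtain ⟨i, rfl⟩ := mem_cyc_edge.mp he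
      have hi : i ∉ N.verts := hcov i (Sym2.mem_mk_left _ _)
      have hi1 : i + 1 ∉ N.verts := hcov _ (Sym2.mem_mk_right _ _)
      have hd1 : i - 1 ≠ i := by
        intro h
        exact finOneNeZero (m := m) (sub_eq_self.mp h)
      have hd2 : i ≠ i + 1 := by
        intro h
        exact finOneNeZero (m := m) (left_eq_add.mp h)
      have hd3 : i - 1 ≠ i + 1 := by
        intro h
        have h' : i = i + 1 + 1 := sub_eq_iff_eq_add.mp h
        rw [add_assoc] at h'
        exact finTwoNeZero (m := m) (left_eq_add.mp h')
      have hsub : N.edgeSet ⊆ ↑((({i - 1, i, i + 1}ᶜ : Finset (Fin (m + 3))).image (phi m))) := by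
        intro e' he'
        obtain ⟨j, rfl⟩ := mem_cyc_edge.mp (N.edgeSet_subset he')
        refine Finset.mem_coe.mpr (Finset.mem_image.mpr ⟨j, ?_, rfl⟩)
        rw [Finset.mem_compl]
        simp only [Finset.mem_insert, Finset.mem_singleton]
        push_neg
        have hj : j ∈ N.verts := N.mem_verts_of_mem_edge he' (Sym2.mem_mk_left _ _)
        have hj1 : j + 1 ∈ N.verts := N.mem_verts_of_mem_edge he' (Sym2.mem_mk_right _ _)
        refine ⟨?_, ?_, ?_⟩
        · rintro rfl
          apply hi
          have : i = (i - 1) + 1 := sub_eq_iff_eq_add.mp rfl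
          rwa [← this] at hj1
        · rintro rfl
          exact hi hj
        · rintro rfl
          exact hi1 hj
      have hc3 : ({i - 1, i, i + 1} : Finset (Fin (m + 3))).card = 3 := by
        rw [Finset.card_insert_of_notMem (by simp [hd1, hd3]),
          Finset.card_insert_of_notMem (by simp [hd2]), Finset.card_singleton]
      have hle : N.edgeSet.ncard ≤ m := by
        calc N.edgeSet.ncard
            ≤ (↑((({i - 1, i, i + 1}ᶜ : Finset (Fin (m + 3))).image (phi m))) :
                Set (Sym2 (Fin (m + 3)))).ncard :=
              Set.ncard_le_ncard hsub (Set.toFinite _)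
          _ = ((({i - 1, i, i + 1}ᶜ : Finset (Fin (m + 3))).image (phi m))).card :=
              Set.ncard_coe_finset _
          _ ≤ (({i - 1, i, i + 1}ᶜ : Finset (Fin (m + 3)))).card := Finset.card_image_le
          _ = m := by rw [Finset.card_compl, hc3]; simp
      omega
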